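/- Monotonicity of the optimal knowledge sequence in patience: if 0 < δ₂ < δ₁ < 1, (s,p) is an optimal contract at discount factor δ₂, and (s′,p′) is an optimal contract at discount factor δ₁, then s_t ≤ s′_t for every t. -/

import Mathlib

open Set Filter

/-- Principal's continuation value `Π_t(s,p) = Σ_{τ=t}^∞ δ^{τ−t}(π(s_τ) − p_τ)`. -/
noncomputable def PiVal (δ : ℝ) (π : ℝ → ℝ) (s p : ℕ → ℝ) (t : ℕ) : ℝ :=
  ∑' k : ℕ, δ ^ k * (π (s (t + k)) - p (t + k))

/-- Expert's continuation value `W_t(s,p) = Σ_{τ=t}^∞ δ^{τ−t}(w(s_τ) + p_τ)`. -/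
noncomputable def WVal (δ : ℝ) (w : ℝ → ℝ) (s p : ℕ → ℝ) (t : ℕ) : ℝ :=
  ∑' k : ℕ, δ ^ k * (w (s (t + k)) + p (t + k))

/-- A contract: `s` takes values in `[0,1]`, `s 0 = 0`, and `t ↦ δ^t·p_t` is summable. -/
def IsContract (δ : ℝ) (s p : ℕ → ℝ) : Prop :=
  (∀ t, s t ∈ Set.Icc (0 : ℝ) 1) ∧ s 0 = 0 ∧ Summable fun t => δ ^ t * p t

/-- Implementability: feasibility (monotone `s`, nonnegative `p`) plus (P-IC) and (E-IC). -/
def Implementable (δ : ℝ) (π w : ℝ → ℝ) (s p : ℕ → ℝ) : Prop :=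
  IsContract δ s p ∧ Monotone s ∧ (∀ t, 0 ≤ p t) ∧
  (∀ t, π (s t) / (1 - δ) ≤ PiVal δ π s p t) ∧
  (∀ t, w (s t) / (1 - δ) ≤ WVal δ w s p (t + 1))

/-- An optimal contract maximizes the principal's time-0 profit among implementable contracts. -/
def Optimal (δ : ℝ) (π w : ℝ → ℝ) (s p : ℕ → ℝ) : Prop :=
  Implementable δ π w s p ∧
  ∀ s' p' : ℕ → ℝ, Implementable δ π w s' p' → PiVal δ π s' p' 0 ≤ PiVal δ π s p 0

section Helpers
variable {δ : ℝ}

lemma abs_le_max' {x a b : ℝ} (h1 : a ≤ x) (h2 : x ≤ b) : |x| ≤ max |a| |b| := by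
  apply abs_le.2
  constructor
  · calc -(max |a| |b|) ≤ -|a| := neg_le_neg (le_max_left _ _)
      _ ≤ a := neg_abs_le a
      _ ≤ x := h1
  · exact h2.trans ((le_abs_self b).trans (le_max_right _ _))

lemma summable_pow_mul_of_bdd (h0 : 0 ≤ δ) (h1 : δ < 1) {a : ℕ → ℝ} {M : ℝ}
    (hM : ∀ k, |a k| ≤ M) : Summable fun k => δ ^ k * a k := by
  apply Summable.of_abs
  refine Summable.of_nonneg_of_le (fun k => abs_nonneg _) (fun k => ?_)
    ((summable_geometric_of_lt_one h0 h1).mul_right M)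
  rw [abs_mul, abs_pow, abs_of_nonneg h0]
  exact mul_le_mul_of_nonneg_left (hM k) (pow_nonneg h0 k)

lemma summable_shift (h0 : 0 < δ) {p : ℕ → ℝ} (hp : Summable fun t => δ ^ t * p t) (t : ℕ) :
    Summable fun k => δ ^ k * p (t + k) := by
  have h1 : Summable fun k => δ ^ (k + t) * p (k + t) := (summable_nat_add_iff t).2 hp
  have h2 := h1.mul_left ((δ ^ t)⁻¹)
  refine h2.congr fun k => ?_
  have hne : (δ:ℝ) ^ t ≠ 0 := pow_ne_zero _ h0.ne'
  rw [add_comm k t, pow_add]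
  field_simp

lemma comp_abs_le {f : ℝ → ℝ} {x : ℝ} (hx : x ∈ Set.Icc (0:ℝ) 1)
    (hf : MonotoneOn f (Set.Icc 0 1) ∨ AntitoneOn f (Set.Icc 0 1)) :
    |f x| ≤ max |f 0| |f 1| := by
  have h0m : (0:ℝ) ∈ Set.Icc (0:ℝ) 1 := by constructor <;> norm_num
  have h1m : (1:ℝ) ∈ Set.Icc (0:ℝ) 1 := by constructor <;> norm_num
  rcases hf with hf | hf
  · exact abs_le_max' (hf h0m hx hx.1) (hf hx h1m hx.2)
  · rw [max_comm]
    exact abs_le_max' (hf hx h1m hx.2) (hf h0m hx hx.1)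

lemma summable_comp (h0 : 0 < δ) (h1 : δ < 1) {f : ℝ → ℝ} {s : ℕ → ℝ}
    (hs : ∀ t, s t ∈ Set.Icc (0:ℝ) 1)
    (hf : MonotoneOn f (Set.Icc 0 1) ∨ AntitoneOn f (Set.Icc 0 1)) :
    Summable fun k => δ ^ k * f (s k) :=
  summable_pow_mul_of_bdd h0.le h1 (fun k => comp_abs_le (hs k) hf)

lemma tsum_shift_rec {g : ℕ → ℝ} (t : ℕ)
    (h : Summable fun k => δ ^ k * g (t + k)) :
    ∑' k : ℕ, δ ^ k * g (t + k) = g t + δ * ∑' k : ℕ, δ ^ k * g (t + 1 + k) := by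
  have e1 : δ * ∑' k : ℕ, δ ^ k * g (t + 1 + k) = ∑' k : ℕ, δ ^ (k + 1) * g (t + (k + 1)) := by
    rw [← tsum_mul_left]
    refine tsum_congr fun k => ?_
    have hidx : t + (k + 1) = t + 1 + k := by omega
    rw [hidx]
    ring
  rw [Summable.tsum_eq_zero_add h, e1]
  norm_num

end Helpers

section Main
variable {π w : ℝ → ℝ} {δ : ℝ}

/-- Relaxed feasibility of a knowledge path. -/
def Rfeas (δ : ℝ) (π w : ℝ → ℝ) (s : ℕ → ℝ) : Prop :=
  (∀ t, s t ∈ Set.Icc (0:ℝ) 1) ∧ s 0 = 0 ∧ Monotone s ∧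
  ∀ t : ℕ, π (s (t+1)) + w (s t) ≤
    (1 - δ) * ∑' k : ℕ, δ ^ k * (π (s (t+1+k)) + w (s (t+1+k)))

lemma piw_split (h0 : 0 < δ) (h1 : δ < 1) (hπm : MonotoneOn π (Set.Icc 0 1))
    (hwa : AntitoneOn w (Set.Icc 0 1)) {s p : ℕ → ℝ} (hs : ∀ t, s t ∈ Set.Icc (0:ℝ) 1)
    (hp : Summable fun t => δ ^ t * p t) (t : ℕ) :
    PiVal δ π s p t + WVal δ w s p t
      = ∑' k : ℕ, δ ^ k * (π (s (t + k)) + w (s (t + k))) := by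
  have hπs : Summable fun k => δ ^ k * π (s (t + k)) :=
    summable_comp h0 h1 (s := fun n => s (t + n)) (fun n => hs _) (Or.inl hπm)
  have hws : Summable fun k => δ ^ k * w (s (t + k)) :=
    summable_comp h0 h1 (s := fun n => s (t + n)) (fun n => hs _) (Or.inr hwa)
  have hps : Summable fun k => δ ^ k * p (t + k) := summable_shift h0 hp t
  have e1 : PiVal δ π s p t
      = (∑' k : ℕ, δ ^ k * π (s (t + k))) - ∑' k : ℕ, δ ^ k * p (t + k) := by
    rw [PiVal, ← Summable.tsum_sub hπs hps]
    exact tsum_congr fun k => mul_sub _ _ _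
  have e2 : WVal δ w s p t
      = (∑' k : ℕ, δ ^ k * w (s (t + k))) + ∑' k : ℕ, δ ^ k * p (t + k) := by
    rw [WVal, ← Summable.tsum_add hws hps]
    exact tsum_congr fun k => mul_add _ _ _
  have e3 : (∑' k : ℕ, δ ^ k * (π (s (t + k)) + w (s (t + k))))
      = (∑' k : ℕ, δ ^ k * π (s (t + k))) + ∑' k : ℕ, δ ^ k * w (s (t + k)) := by
    rw [← Summable.tsum_add hπs hws]
    exact tsum_congr fun k => mul_add _ _ _
  rw [e1, e2, e3]
  ring

lemma wval_rec (h0 : 0 < δ) (h1 : δ < 1)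
    (hwa : AntitoneOn w (Set.Icc 0 1)) {s p : ℕ → ℝ} (hs : ∀ t, s t ∈ Set.Icc (0:ℝ) 1)
    (hp : Summable fun t => δ ^ t * p t) (t : ℕ) :
    WVal δ w s p t = (w (s t) + p t) + δ * WVal δ w s p (t + 1) := by
  have hws : Summable fun k => δ ^ k * w (s (t + k)) :=
    summable_comp h0 h1 (s := fun n => s (t + n)) (fun n => hs _) (Or.inr hwa)
  have hps : Summable fun k => δ ^ k * p (t + k) := summable_shift h0 hp t
  have hsum : Summable fun k => δ ^ k * ((fun n => w (s n) + p n) (t + k)) :=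
    (hws.add hps).congr fun k => by simp [mul_add]
  exact tsum_shift_rec (g := fun n => w (s n) + p n) t hsum

lemma necessity (hπm : MonotoneOn π (Set.Icc 0 1)) (hwa : AntitoneOn w (Set.Icc 0 1))
    (h0 : 0 < δ) (h1 : δ < 1) {s p : ℕ → ℝ} (h : Implementable δ π w s p) :
    Rfeas δ π w s ∧
      PiVal δ π s p 0 ≤ (∑' k : ℕ, δ ^ k * (π (s k) + w (s k))) - w 0 / (1 - δ) := by
  obtain ⟨⟨hs, hs0, hp⟩, hmono, hpnn, hPIC, hEIC⟩ := h
  have h1δ : (0:ℝ) < 1 - δ := by linarith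
  have hcon : ∀ t : ℕ, π (s (t+1)) + w (s t) ≤
      (1 - δ) * ∑' k : ℕ, δ ^ k * (π (s (t+1+k)) + w (s (t+1+k))) := by
    intro t
    have hE := hEIC t
    have hP := hPIC (t+1)
    have hsplit := piw_split h0 h1 hπm hwa hs hp (t+1)
    have h2 : (π (s (t+1)) + w (s t)) / (1-δ)
        ≤ ∑' k : ℕ, δ ^ k * (π (s (t+1+k)) + w (s (t+1+k))) := by
      rw [add_div]
      linarith
    calc π (s (t+1)) + w (s t) = (1-δ) * ((π (s (t+1)) + w (s t)) / (1-δ)) := by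
          field_simp
      _ ≤ _ := mul_le_mul_of_nonneg_left h2 h1δ.le
  have hW1 : w 0 / (1-δ) ≤ WVal δ w s p (0+1) := by
    have := hEIC 0
    rwa [hs0] at this
  have hrec := wval_rec h0 h1 hwa hs hp 0
  have hW0 : w 0 / (1-δ) ≤ WVal δ w s p 0 := by
    have hd := mul_le_mul_of_nonneg_left hW1 h0.le
    have hid : w 0 + δ * (w 0 / (1-δ)) = w 0 / (1-δ) := by
      field_simp
      ring
    have hp0 := hpnn 0
    rw [hs0] at hrec
    linarith
  have hsplit0 := piw_split h0 h1 hπm hwa hs hp 0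
  have hidx : (∑' k : ℕ, δ ^ k * (π (s (0 + k)) + w (s (0 + k))))
      = ∑' k : ℕ, δ ^ k * (π (s k) + w (s k)) := by
    refine tsum_congr fun k => by rw [Nat.zero_add]
  refine ⟨⟨hs, hs0, hmono, hcon⟩, ?_⟩
  rw [hidx] at hsplit0
  linarith


lemma sufficiency (hπm : MonotoneOn π (Set.Icc 0 1)) (hwa : AntitoneOn w (Set.Icc 0 1))
    (hGmono : MonotoneOn (fun x => π x + w x) (Set.Icc 0 1))
    (h0 : 0 < δ) (h1 : δ < 1) {s : ℕ → ℝ} (hR : Rfeas δ π w s) :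
    ∃ q : ℕ → ℝ, Implementable δ π w s q ∧
      PiVal δ π s q 0 = (∑' k : ℕ, δ ^ k * (π (s k) + w (s k))) - w 0 / (1 - δ) := by
  obtain ⟨hs, hs0, hmono, hcon⟩ := hR
  have h1δ : (0:ℝ) < 1 - δ := by linarith
  have hne : (1:ℝ) - δ ≠ 0 := h1δ.ne'
  set q : ℕ → ℝ := fun t => (w (s (t - 1)) - w (s t)) / (1 - δ) with hq
  have hqnn : ∀ t, 0 ≤ q t := by
    intro t
    have hle : w (s t) ≤ w (s (t - 1)) := hwa (hs (t-1)) (hs t) (hmono (Nat.sub_le t 1))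
    exact div_nonneg (sub_nonneg.2 hle) h1δ.le
  have hbw : ∀ n : ℕ, |w (s n)| ≤ max |w 0| |w 1| := fun n => comp_abs_le (hs n) (Or.inr hwa)
  have hqsum : Summable fun t => δ ^ t * q t := by
    apply summable_pow_mul_of_bdd h0.le h1 (M := (max |w 0| |w 1| + max |w 0| |w 1|) / (1-δ))
    intro t
    rw [hq]
    simp only
    rw [abs_div, abs_of_pos h1δ]
    apply (div_le_div_iff_of_pos_right h1δ).2
    exact (abs_sub _ _).trans (add_le_add (hbw _) (hbw _))
  -- the key computation of the expert value
  have hwsumm : ∀ t : ℕ, Summable fun k => δ ^ k * w (s (t + k)) := fun t =>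
    summable_comp h0 h1 (s := fun n => s (t + n)) (fun n => hs _) (Or.inr hwa)
  have hWval : ∀ t : ℕ, WVal δ w s q t = w (s (t - 1)) / (1 - δ) := by
    intro t
    have hf1 : Summable fun k => δ ^ k * w (s (t + k - 1)) :=
      summable_pow_mul_of_bdd h0.le h1 (fun k => hbw (t + k - 1))
    have hf2 : Summable fun k => δ ^ (k + 1) * w (s (t + k)) := by
      refine ((hwsumm t).mul_left δ).congr fun k => ?_
      ring
    have key : ∀ k : ℕ, δ ^ k * (w (s (t + k)) + q (t + k))
        = (1 - δ)⁻¹ * (δ ^ k * w (s (t + k - 1)) - δ ^ (k + 1) * w (s (t + k))) := by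
      intro k
      rw [hq]
      simp only
      field_simp
      ring
    have e0 : WVal δ w s q t
        = (1-δ)⁻¹ * ∑' k : ℕ, (δ ^ k * w (s (t + k - 1)) - δ ^ (k + 1) * w (s (t + k))) := by
      rw [WVal, ← tsum_mul_left]
      exact tsum_congr key
    have e1 : (∑' k : ℕ, (δ ^ k * w (s (t + k - 1)) - δ ^ (k + 1) * w (s (t + k))))
        = (∑' k : ℕ, δ ^ k * w (s (t + k - 1))) - ∑' k : ℕ, δ ^ (k + 1) * w (s (t + k)) :=
      Summable.tsum_sub hf1 hf2
    have e2 : (∑' k : ℕ, δ ^ k * w (s (t + k - 1)))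
        = w (s (t - 1)) + ∑' k : ℕ, δ ^ (k + 1) * w (s (t + k)) := by
      rw [Summable.tsum_eq_zero_add hf1]
      have h00 : δ ^ 0 * w (s (t + 0 - 1)) = w (s (t - 1)) := by norm_num
      have htail : (∑' k : ℕ, δ ^ (k + 1) * w (s (t + (k + 1) - 1)))
          = ∑' k : ℕ, δ ^ (k + 1) * w (s (t + k)) :=
        tsum_congr fun k => by
          have hix : t + (k + 1) - 1 = t + k := by omega
          rw [hix]
      rw [h00, htail]
    rw [e0, e1, e2]
    field_simp
    ring
  have hEIC : ∀ t : ℕ, w (s t) / (1 - δ) ≤ WVal δ w s q (t + 1) := by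
    intro t
    rw [hWval (t + 1)]
    simp
  -- principal value identity
  have hPival : ∀ t : ℕ, PiVal δ π s q t
      = (∑' k : ℕ, δ ^ k * (π (s (t + k)) + w (s (t + k)))) - w (s (t - 1)) / (1 - δ) := by
    intro t
    have := piw_split h0 h1 hπm hwa hs hqsum t
    rw [hWval t] at this
    linarith
  have hPIC : ∀ t : ℕ, π (s t) / (1 - δ) ≤ PiVal δ π s q t := by
    intro t
    have hbound : π (s t) + w (s (t - 1))
        ≤ (1 - δ) * ∑' k : ℕ, δ ^ k * (π (s (t + k)) + w (s (t + k))) := by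
      cases t with
      | zero =>
          have hterm : ∀ k : ℕ, δ ^ k * (π (s 0) + w (s 0))
              ≤ δ ^ k * (π (s (0 + k)) + w (s (0 + k))) := by
            intro k
            exact mul_le_mul_of_nonneg_left
              (hGmono (hs 0) (hs (0 + k)) (hmono (Nat.zero_le _))) (pow_nonneg h0.le k)
          have hgeo : Summable fun k : ℕ => δ ^ k * (π (s 0) + w (s 0)) :=
            (summable_geometric_of_lt_one h0.le h1).mul_right _
          have hGs : Summable fun k : ℕ => δ ^ k * (π (s (0 + k)) + w (s (0 + k))) := by
            refine (((summable_comp h0 h1 (s := fun n => s (0 + n)) (fun n => hs _) (Or.inl hπm)).add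
              (summable_comp h0 h1 (s := fun n => s (0 + n)) (fun n => hs _) (Or.inr hwa)))).congr
              fun k => ?_
            simp [mul_add]
          have hle := Summable.tsum_le_tsum hterm hgeo hGs
          have hgeoval : (∑' k : ℕ, δ ^ k * (π (s 0) + w (s 0)))
              = (π (s 0) + w (s 0)) / (1 - δ) := by
            rw [tsum_mul_right, tsum_geometric_of_lt_one h0.le h1]
            rw [inv_mul_eq_div]
          rw [hgeoval] at hle
          have : π (s 0) + w (s 0) ≤ (1 - δ) * ∑' k : ℕ, δ ^ k * (π (s (0 + k)) + w (s (0 + k))) := by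
            rw [← div_le_iff₀' h1δ]
            exact hle
          simpa using this
      | succ t' =>
          have := hcon t'
          have hidx : t' + 1 - 1 = t' := by omega
          rw [hidx]
          exact this
    rw [hPival t]
    have h2 : (π (s t) + w (s (t - 1))) / (1 - δ)
        ≤ ∑' k : ℕ, δ ^ k * (π (s (t + k)) + w (s (t + k))) := by
      rw [div_le_iff₀ h1δ]
      linarith [hbound]
    rw [add_div] at h2
    linarith
  refine ⟨q, ⟨⟨hs, hs0, hqsum⟩, hmono, hqnn, hPIC, hEIC⟩, ?_⟩
  rw [hPival 0]
  have hidx : (∑' k : ℕ, δ ^ k * (π (s (0 + k)) + w (s (0 + k))))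
      = ∑' k : ℕ, δ ^ k * (π (s k) + w (s k)) :=
    tsum_congr fun k => by rw [Nat.zero_add]
  rw [hidx]
  norm_num [hs0]
lemma abel_mono {a : ℕ → ℝ} (hmono : Monotone a) {M : ℝ} (hM : ∀ k, |a k| ≤ M)
    {δ₂ δ₁ : ℝ} (h2 : 0 ≤ δ₂) (h21 : δ₂ ≤ δ₁) (h1 : δ₁ < 1) :
    (1 - δ₂) * ∑' k : ℕ, δ₂ ^ k * a k ≤ (1 - δ₁) * ∑' k : ℕ, δ₁ ^ k * a k := by
  have key : ∀ δ : ℝ, 0 ≤ δ → δ < 1 →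
      (1 - δ) * ∑' k : ℕ, δ ^ k * a k
        = a 0 + δ * ∑' k : ℕ, δ ^ k * (a (k + 1) - a k) := by
    intro δ hd0 hd1
    have hsA : Summable fun k => δ ^ k * a k := summable_pow_mul_of_bdd hd0 hd1 hM
    have hsB : Summable fun k => δ ^ (k + 1) * a k := by
      refine (hsA.mul_left δ).congr fun k => ?_
      ring
    have hsB' : Summable fun k => δ ^ (k + 1) * a (k + 1) := by
      refine ((summable_nat_add_iff 1).2 hsA).congr fun k => ?_
      rfl
    have e1 : (∑' k : ℕ, δ ^ k * a k) = a 0 + ∑' k : ℕ, δ ^ (k + 1) * a (k + 1) := by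
      rw [Summable.tsum_eq_zero_add hsA]
      norm_num
    have e2 : δ * (∑' k : ℕ, δ ^ k * (a (k + 1) - a k))
        = (∑' k : ℕ, δ ^ (k + 1) * a (k + 1)) - ∑' k : ℕ, δ ^ (k + 1) * a k := by
      rw [← Summable.tsum_sub hsB' hsB, ← tsum_mul_left]
      refine tsum_congr fun k => ?_
      ring
    have e3 : δ * (∑' k : ℕ, δ ^ k * a k) = ∑' k : ℕ, δ ^ (k + 1) * a k := by
      rw [← tsum_mul_left]
      refine tsum_congr fun k => ?_
      ring
    have expand : (1 - δ) * ∑' k : ℕ, δ ^ k * a k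
        = (∑' k : ℕ, δ ^ k * a k) - δ * ∑' k : ℕ, δ ^ k * a k := by ring
    rw [expand, e3, e1, e2]
    ring
  have hd2lt1 : δ₂ < 1 := lt_of_le_of_lt h21 h1
  have hd1nn : 0 ≤ δ₁ := le_trans h2 h21
  rw [key δ₂ h2 hd2lt1, key δ₁ hd1nn h1]
  have hb : ∀ k, |a (k + 1) - a k| ≤ M + M := fun k =>
    (abs_sub _ _).trans (add_le_add (hM _) (hM _))
  have hs2 : Summable fun k => δ₂ ^ k * (a (k + 1) - a k) :=
    summable_pow_mul_of_bdd h2 hd2lt1 hb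
  have hs1 : Summable fun k => δ₁ ^ k * (a (k + 1) - a k) :=
    summable_pow_mul_of_bdd hd1nn h1 hb
  have hterm : ∀ k, δ₂ ^ k * (a (k + 1) - a k) ≤ δ₁ ^ k * (a (k + 1) - a k) := fun k =>
    mul_le_mul_of_nonneg_right (pow_le_pow_left₀ h2 h21 k)
      (sub_nonneg.2 (hmono (Nat.le_succ k)))
  have hsle : (∑' k : ℕ, δ₂ ^ k * (a (k + 1) - a k)) ≤ ∑' k : ℕ, δ₁ ^ k * (a (k + 1) - a k) :=
    Summable.tsum_le_tsum hterm hs2 hs1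
  have hnn : 0 ≤ ∑' k : ℕ, δ₂ ^ k * (a (k + 1) - a k) :=
    tsum_nonneg fun k => mul_nonneg (pow_nonneg h2 k) (sub_nonneg.2 (hmono (Nat.le_succ k)))
  have := mul_le_mul h21 hsle hnn hd1nn
  linarith

lemma rfeas_mono_delta (hπm : MonotoneOn π (Set.Icc 0 1)) (hwa : AntitoneOn w (Set.Icc 0 1))
    (hGmono : MonotoneOn (fun x => π x + w x) (Set.Icc 0 1))
    {δ₂ δ₁ : ℝ} (h2 : 0 < δ₂) (h21 : δ₂ ≤ δ₁) (h1 : δ₁ < 1)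
    {s : ℕ → ℝ} (hR : Rfeas δ₂ π w s) : Rfeas δ₁ π w s := by
  obtain ⟨hs, hs0, hmono, hcon⟩ := hR
  refine ⟨hs, hs0, hmono, fun t => ?_⟩
  refine (hcon t).trans ?_
  have hMb : ∀ k : ℕ, |π (s (t + 1 + k)) + w (s (t + 1 + k))|
      ≤ max |π 0| |π 1| + max |w 0| |w 1| := fun k =>
    (abs_add_le _ _).trans (add_le_add (comp_abs_le (hs _) (Or.inl hπm))
      (comp_abs_le (hs _) (Or.inr hwa)))
  exact abel_mono (a := fun k => π (s (t + 1 + k)) + w (s (t + 1 + k)))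
    (fun k l hkl => hGmono (hs _) (hs _) (hmono (by omega))) hMb h2.le h21 h1

lemma rfeas_max (hπm : MonotoneOn π (Set.Icc 0 1)) (hwa : AntitoneOn w (Set.Icc 0 1))
    (hGmono : MonotoneOn (fun x => π x + w x) (Set.Icc 0 1))
    (h0 : 0 < δ) (h1 : δ < 1) {s s' : ℕ → ℝ}
    (hR : Rfeas δ π w s) (hR' : Rfeas δ π w s') :
    Rfeas δ π w (fun t => max (s t) (s' t)) := by
  obtain ⟨hs, hs0, hmono, hcon⟩ := hR
  obtain ⟨hs', hs0', hmono', hcon'⟩ := hR'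
  have h1δ : (0:ℝ) ≤ 1 - δ := by linarith
  have hsV : ∀ t, max (s t) (s' t) ∈ Set.Icc (0:ℝ) 1 := fun t =>
    ⟨le_trans (hs t).1 (le_max_left _ _), max_le (hs t).2 (hs' t).2⟩
  refine ⟨hsV, by simp [hs0, hs0'], hmono.max hmono', fun t => ?_⟩
  have tsle : ∀ u : ℕ → ℝ, (∀ n, u n ∈ Set.Icc (0:ℝ) 1) → (∀ k, u (t + 1 + k) ≤ max (s (t+1+k)) (s' (t+1+k))) →
      (∑' k : ℕ, δ ^ k * (π (u (t+1+k)) + w (u (t+1+k))))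
        ≤ ∑' k : ℕ, δ ^ k * (π (max (s (t+1+k)) (s' (t+1+k))) + w (max (s (t+1+k)) (s' (t+1+k)))) := by
    intro u hu hle
    refine Summable.tsum_le_tsum (fun k => ?_) ?_ ?_
    · exact mul_le_mul_of_nonneg_left (hGmono (hu _) (hsV _) (hle k)) (pow_nonneg h0.le k)
    · refine ((summable_comp h0 h1 (s := fun n => u (t+1+n)) (fun n => hu _) (Or.inl hπm)).add
        (summable_comp h0 h1 (s := fun n => u (t+1+n)) (fun n => hu _) (Or.inr hwa))).congr
        fun k => by simp [mul_add]
    · refine ((summable_comp h0 h1 (s := fun n => max (s (t+1+n)) (s' (t+1+n))) (fun n => hsV _) (Or.inl hπm)).add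
        (summable_comp h0 h1 (s := fun n => max (s (t+1+n)) (s' (t+1+n))) (fun n => hsV _) (Or.inr hwa))).congr
        fun k => by simp [mul_add]
  rcases le_total (s (t+1)) (s' (t+1)) with hc | hc
  · have hmax1 : max (s (t+1)) (s' (t+1)) = s' (t+1) := max_eq_right hc
    have hwle : w (max (s t) (s' t)) ≤ w (s' t) :=
      hwa (hs' t) (hsV t) (le_max_right _ _)
    calc π (max (s (t+1)) (s' (t+1))) + w (max (s t) (s' t))
        ≤ π (s' (t+1)) + w (s' t) := by rw [hmax1]; linarith
      _ ≤ (1 - δ) * ∑' k : ℕ, δ ^ k * (π (s' (t+1+k)) + w (s' (t+1+k))) := hcon' t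
      _ ≤ _ := mul_le_mul_of_nonneg_left (tsle s' hs' (fun k => le_max_right _ _)) h1δ
  · have hmax1 : max (s (t+1)) (s' (t+1)) = s (t+1) := max_eq_left hc
    have hwle : w (max (s t) (s' t)) ≤ w (s t) :=
      hwa (hs t) (hsV t) (le_max_left _ _)
    calc π (max (s (t+1)) (s' (t+1))) + w (max (s t) (s' t))
        ≤ π (s (t+1)) + w (s t) := by rw [hmax1]; linarith
      _ ≤ (1 - δ) * ∑' k : ℕ, δ ^ k * (π (s (t+1+k)) + w (s (t+1+k))) := hcon t
      _ ≤ _ := mul_le_mul_of_nonneg_left (tsle s hs (fun k => le_max_left _ _)) h1δ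

end Main

theorem optimal_sequence_monotone_in_patience
    (π w : ℝ → ℝ)
    (hπc : ContinuousOn π (Set.Icc 0 1)) (hwc : ContinuousOn w (Set.Icc 0 1))
    (hπm : StrictMonoOn π (Set.Icc 0 1)) (hwa : StrictAntiOn w (Set.Icc 0 1))
    (hGm : StrictMonoOn (fun x => π x + w x) (Set.Icc 0 1))
    (δ₁ δ₂ : ℝ) (hδ₂ : 0 < δ₂) (h₂₁ : δ₂ < δ₁) (hδ₁ : δ₁ < 1)
    (s p s' p' : ℕ → ℝ)
    (hopt₂ : Optimal δ₂ π w s p) (hopt₁ : Optimal δ₁ π w s' p') :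
    ∀ t, s t ≤ s' t := by
  have hπmo := hπm.monotoneOn
  have hwao := hwa.antitoneOn
  have hGmo := hGm.monotoneOn
  have hδ₂1 : δ₂ < 1 := h₂₁.trans hδ₁
  have hδ₁0 : 0 < δ₁ := hδ₂.trans h₂₁
  by_contra hcontra
  push_neg at hcontra
  obtain ⟨t₀, ht₀⟩ := hcontra
  obtain ⟨hR2, -⟩ := necessity hπmo hwao hδ₂ hδ₂1 hopt₂.1
  obtain ⟨hR1', hbound'⟩ := necessity hπmo hwao hδ₁0 hδ₁ hopt₁.1
  have hRs1 : Rfeas δ₁ π w s := rfeas_mono_delta hπmo hwao hGmo hδ₂ h₂₁.le hδ₁ hR2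
  set sV : ℕ → ℝ := fun t => max (s t) (s' t) with hsVdef
  have hRV : Rfeas δ₁ π w sV := rfeas_max hπmo hwao hGmo hδ₁0 hδ₁ hRs1 hR1'
  obtain ⟨q, himpl, hval⟩ := sufficiency hπmo hwao hGmo hδ₁0 hδ₁ hRV
  have hle := hopt₁.2 sV q himpl
  have hsV : ∀ t, sV t ∈ Set.Icc (0:ℝ) 1 := hRV.1
  have hs'm : ∀ t, s' t ∈ Set.Icc (0:ℝ) 1 := hR1'.1
  have hlt : s' t₀ < sV t₀ := by
    simp only [hsVdef]
    exact lt_of_lt_of_le ht₀ (le_max_left _ _)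
  have hstrict : (∑' k : ℕ, δ₁ ^ k * (π (s' k) + w (s' k)))
      < ∑' k : ℕ, δ₁ ^ k * (π (sV k) + w (sV k)) := by
    apply Summable.tsum_lt_tsum (i := t₀)
    · intro k
      have hle' : s' k ≤ sV k := by
        simp only [hsVdef]
        exact le_max_right _ _
      exact mul_le_mul_of_nonneg_left (hGmo (hs'm k) (hsV k) hle') (pow_nonneg hδ₁0.le k)
    · exact mul_lt_mul_of_pos_left (hGm (hs'm t₀) (hsV t₀) hlt) (pow_pos hδ₁0 t₀)
    · refine ((summable_comp hδ₁0 hδ₁ hs'm (Or.inl hπmo)).add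
        (summable_comp hδ₁0 hδ₁ hs'm (Or.inr hwao))).congr fun k => by simp [mul_add]
    · refine ((summable_comp hδ₁0 hδ₁ hsV (Or.inl hπmo)).add
        (summable_comp hδ₁0 hδ₁ hsV (Or.inr hwao))).congr fun k => by simp [mul_add]
  linarith
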